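/- Let (ξ_n)_{n=1}^∞ be a sequence of independent nonnegative random variables on a probability space. Then almost surely liminf_{n→∞} ξ_n ≤ liminf_{n→∞} E(ξ_n), where expectations are taken in [0,∞]. -/

import Mathlib

open MeasureTheory Filter Metric Set Topology
open scoped ENNReal

noncomputable section

/-- The topological support of a measure on a metric space. -/
def msupport {X : Type*} [PseudoMetricSpace X] [MeasurableSpace X] (μ : Measure X) : Set X :=
  {x | ∀ r : ℝ, 0 < r → 0 < μ (ball x r)}

/-- The lower local dimension of a measure at a point,
`liminf_{r → 0⁺} log μ(B(x,r)) / log r`, valued in `ℝ≥0∞`. -/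
def dimLocLower {X : Type*} [PseudoMetricSpace X] [MeasurableSpace X]
    (μ : Measure X) (x : X) : ℝ≥0∞ :=
  Filter.liminf
    (fun r : ℝ => ENNReal.ofReal (Real.log (μ (ball x r)).toReal / Real.log r)) (𝓝[>] (0:ℝ))

/-- The upper local dimension of a measure at a point. -/
def dimLocUpper {X : Type*} [PseudoMetricSpace X] [MeasurableSpace X]
    (μ : Measure X) (x : X) : ℝ≥0∞ :=
  Filter.limsup
    (fun r : ℝ => ENNReal.ofReal (Real.log (μ (ball x r)).toReal / Real.log r)) (𝓝[>] (0:ℝ))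

/-- The upper Hausdorff dimension of a measure: the essential supremum of the
lower local dimension. -/
def dimHUpper {X : Type*} [PseudoMetricSpace X] [MeasurableSpace X] (μ : Measure X) : ℝ≥0∞ :=
  essSup (fun x => dimLocLower μ x) μ

/-- The random covering set `E_r(ω) = limsup_k B(ω_k, r_k)`. -/
def coverSet {X : Type*} [PseudoMetricSpace X] (ω : ℕ → X) (r : ℕ → ℝ) : Set X :=
  ⋂ n : ℕ, ⋃ k : ℕ, ⋃ _ : n ≤ k, ball (ω k) (r k)

/-- `s₂(r) = inf {s > 0 | ∑ r_k ^ s < ∞}`, with `inf ∅ = ∞`. -/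
def sTwo (r : ℕ → ℝ) : ℝ≥0∞ :=
  ⨅ (s : ℝ) (_ : 0 < s) (_ : Summable fun k => r k ^ s), ENNReal.ofReal s

/-- `P` is the countable product `μ^ℕ` of copies of the probability measure `μ`:
it gives every finite-dimensional cylinder the product measure. -/
def IsProductMeasure {X : Type*} [MeasurableSpace X]
    (P : Measure (ℕ → X)) (μ : Measure X) : Prop :=
  ∀ (n : ℕ) (S : Fin n → Set X), (∀ i, MeasurableSet (S i)) →
    P {ω | ∀ i : Fin n, ω (i : ℕ) ∈ S i} = ∏ i, μ (S i)

/-- The `t`-energy `I_t(ν) = ∬ |x-y|^{-t} dν(y) dν(x)`. -/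
def energy {X : Type*} [EMetricSpace X] [MeasurableSpace X] (t : ℝ) (ν : Measure X) : ℝ≥0∞ :=
  ∫⁻ x, ∫⁻ y, edist x y ^ (-t) ∂ν ∂ν

/-- The `t`-potential `φ^t_ν(y) = ∫ |y-x|^{-t} dν(x)`. -/
def potential {X : Type*} [EMetricSpace X] [MeasurableSpace X]
    (t : ℝ) (ν : Measure X) (y : X) : ℝ≥0∞ :=
  ∫⁻ x, edist y x ^ (-t) ∂ν

/-- The `t`-capacity of a set. -/
def capacity {X : Type*} [MetricSpace X] [MeasurableSpace X] (t : ℝ) (A : Set X) : ℝ≥0∞ :=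
  ⨆ (σ : Measure X) (_ : IsProbabilityMeasure σ) (_ : msupport σ ⊆ A), (energy t σ)⁻¹

/-- `μ` is `(C,s)`-Frostman: `μ(B(x,r)) ≤ C r^s` for all `x` and `r > 0`. -/
def IsFrostman {X : Type*} [PseudoMetricSpace X] [MeasurableSpace X]
    (μ : Measure X) (C s : ℝ) : Prop :=
  ∀ x, ∀ r : ℝ, 0 < r → μ (ball x r) ≤ ENNReal.ofReal (C * r ^ s)

end

/-- For a sequence of independent nonnegative random variables,
`liminf ξ_n ≤ liminf E(ξ_n)` almost surely. -/
theorem stmt8 {Ω : Type*} [MeasurableSpace Ω] (P : Measure Ω) [IsProbabilityMeasure P]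
    (ξ : ℕ → Ω → ℝ≥0∞) (hmeas : ∀ n, Measurable (ξ n))
    (hind : ProbabilityTheory.iIndepFun ξ P) :
    ∀ᵐ ω ∂P, Filter.liminf (fun n => ξ n ω) atTop ≤
      Filter.liminf (fun n => ∫⁻ ω', ξ n ω' ∂P) atTop := by
  set L : ℝ≥0∞ := Filter.liminf (fun n => ∫⁻ ω', ξ n ω' ∂P) atTop with hL
  rcases eq_or_ne L ⊤ with hT | hT
  · filter_upwards with ω; rw [hT]; exact le_top
  -- key step: for each k, a.s. liminf ξ ≤ L + 2 * (k+1)⁻¹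
  have key : ∀ k : ℕ, ∀ᵐ ω ∂P,
      Filter.liminf (fun n => ξ n ω) atTop ≤ L + 2 * ((k : ℝ≥0∞) + 1)⁻¹ := by
    intro k
    set ε : ℝ≥0∞ := ((k : ℝ≥0∞) + 1)⁻¹ with hε
    have hε0 : ε ≠ 0 := by
      simp [hε, ENNReal.inv_ne_zero]
    have hεT : ε ≠ ⊤ := by simp [hε]
    set c' : ℝ≥0∞ := L + ε with hc'
    set c : ℝ≥0∞ := L + 2 * ε with hc
    have hc'c : c' < c := by
      apply ENNReal.add_lt_add_left hT
      rw [two_mul]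
      exact ENNReal.lt_add_right hεT hε0
    have hc0 : c ≠ 0 := by
      intro h
      rw [hc, add_eq_zero] at h
      exact hε0 (by simpa using h.2)
    have hcT : c ≠ ⊤ := by
      simp [hc, hT]
      exact ENNReal.mul_ne_top (by norm_num) hεT
    -- the events
    set s : ℕ → Set Ω := fun n => {ω | ξ n ω < c} with hs
    have hsm : ∀ n, MeasurableSet (s n) := fun n => (hmeas n) measurableSet_Iio
    have hindep : ProbabilityTheory.iIndepSet s P := by
      rw [ProbabilityTheory.iIndepSet_iff_meas_biInter hsm]
      intro t
      exact hind.measure_inter_preimage_eq_mul t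
        (sets := fun _ => Iio c) (fun i _ => measurableSet_Iio)
    -- frequently, E ξ n < c'
    have hfreq : ∃ᶠ n in atTop, (∫⁻ ω', ξ n ω' ∂P) < c' := by
      have h1 : Filter.liminf (fun n => ∫⁻ ω', ξ n ω' ∂P) atTop < c' := by
        rw [← hL, hc']
        exact ENNReal.lt_add_right hT hε0
      exact frequently_lt_of_liminf_lt (by isBoundedDefault) h1
    -- on those n, P (s n) ≥ 1 - c'/c
    set δ : ℝ≥0∞ := 1 - c' / c with hδ
    have hδ0 : 0 < δ := by
      rw [hδ, tsub_pos_iff_lt]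
      rw [ENNReal.div_lt_iff (Or.inl hc0) (Or.inl hcT), one_mul]
      exact hc'c
    have hbound : ∀ n, (∫⁻ ω', ξ n ω' ∂P) < c' → δ ≤ P (s n) := by
      intro n hn
      have hmarkov : P {ω | c ≤ ξ n ω} ≤ c' / c := by
        refine le_trans (meas_ge_le_lintegral_div (hmeas n).aemeasurable hc0 hcT) ?_
        exact ENNReal.div_le_div_right hn.le c
      have hcompl : s n = {ω | c ≤ ξ n ω}ᶜ := by
        ext ω; simp [hs, not_le]
      have hms : MeasurableSet {ω | c ≤ ξ n ω} := (hmeas n) measurableSet_Ici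
      rw [hcompl, measure_compl hms (measure_ne_top P _), measure_univ]
      exact tsub_le_tsub_left hmarkov 1
    -- sum of measures diverges
    have hsum : (∑' n, P (s n)) = ⊤ := by
      by_contra h
      have htend0 : Tendsto (fun n => P (s n)) atTop (𝓝 0) :=
        ENNReal.tendsto_atTop_zero_of_tsum_ne_top h
      have hev : ∀ᶠ n in atTop, P (s n) < δ :=
        htend0.eventually_lt_const hδ0
      obtain ⟨n, hn1, hn2⟩ := (hfreq.and_eventually hev).exists
      exact absurd (hbound n hn1) (not_le.2 hn2)
    have hBC := ProbabilityTheory.measure_limsup_eq_one hsm hindep hsum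
    have hae : ∀ᵐ ω ∂P, ω ∈ limsup s atTop := by
      rw [ae_iff]
      have heq : {ω | ¬ ω ∈ limsup s atTop} = (limsup s atTop)ᶜ := rfl
      rw [heq, measure_compl, hBC, measure_univ, tsub_self]
      · exact MeasurableSet.measurableSet_limsup (fun n => hsm n)
      · exact measure_ne_top P _
    filter_upwards [hae] with ω hω
    rw [mem_limsup_iff_frequently_mem] at hω
    exact liminf_le_of_frequently_le (hω.mono fun n h => le_of_lt h)
  rw [← ae_all_iff] at key
  filter_upwards [key] with ω hω
  have htend : Tendsto (fun k : ℕ => L + 2 * ((k : ℝ≥0∞) + 1)⁻¹) atTop (𝓝 L) := by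
    have h0 : Tendsto (fun k : ℕ => ((k : ℝ≥0∞) + 1)) atTop (𝓝 ⊤) := by
      apply (ENNReal.tendsto_nat_nhds_top.comp (tendsto_add_atTop_nat 1)).congr
      intro k
      simp [Function.comp]
    have h1 : Tendsto (fun k : ℕ => ((k : ℝ≥0∞) + 1)⁻¹) atTop (𝓝 0) := by
      simpa using ENNReal.tendsto_inv_iff.2 h0
    have h2 : Tendsto (fun k : ℕ => 2 * ((k : ℝ≥0∞) + 1)⁻¹) atTop (𝓝 0) := by
      simpa using ENNReal.Tendsto.const_mul h1 (Or.inr (by norm_num))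
    simpa using Tendsto.add (tendsto_const_nhds (x := L)) h2
  exact ge_of_tendsto' htend hω
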